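/- For all integers k ≥ 0 and 0 ≤ m ≤ k and all complex parameters z₁, z₂ ∈ ℂ, the complex combinations of directional derivatives of F_k^m satisfy, identically on ℝ⁴: ∇_{e₂} F_k^m - i·∇_{e₃} F_k^m = 2m·F_k^{m-1} and ∇_{e₂} F_k^m + i·∇_{e₃} F_k^m = -2(k-m)·F_k^{m+1}, with the convention that F_k^{-1} = 0 and F_k^{k+1} = 0. -/

import Mathlib

/-- The polynomial `F_k^m(x,y,z,w) = (αz₁+βz₂)^m (-conj(β)z₁+conj(α)z₂)^{k-m}` where
`α = x+iy`, `β = z+iw`, with the convention that `F_k^m = 0` unless `0 ≤ m ≤ k`. -/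
noncomputable def Fkm (k : ℕ) (m : ℤ) (z₁ z₂ : ℂ) (p : Fin 4 → ℝ) : ℂ :=
  if 0 ≤ m ∧ m ≤ (k : ℤ) then
    (((p 0 : ℂ) + (p 1 : ℂ) * Complex.I) * z₁ +
        ((p 2 : ℂ) + (p 3 : ℂ) * Complex.I) * z₂) ^ m.toNat *
      ((-(starRingEnd ℂ) ((p 2 : ℂ) + (p 3 : ℂ) * Complex.I)) * z₁ +
        (starRingEnd ℂ) ((p 0 : ℂ) + (p 1 : ℂ) * Complex.I) * z₂) ^ (k - m.toNat)
  else 0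

/-- The vector field `e₂(x,y,z,w) = (-z, w, x, -y)` on `ℝ⁴`. -/
def fieldE2 (p : Fin 4 → ℝ) : Fin 4 → ℝ := ![-p 2, p 3, p 0, -p 1]

/-- The vector field `e₃(x,y,z,w) = (-w, -z, y, x)` on `ℝ⁴`. -/
def fieldE3 (p : Fin 4 → ℝ) : Fin 4 → ℝ := ![-p 3, -p 2, p 1, p 0]

/-- Complexified coordinate projection. -/
noncomputable def coordC (i : Fin 4) : (Fin 4 → ℝ) →L[ℝ] ℂ :=
  Complex.ofRealCLM.comp (ContinuousLinearMap.proj i)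

lemma coordC_apply (i : Fin 4) (p : Fin 4 → ℝ) : coordC i p = (p i : ℂ) := rfl

lemma hasFDerivAt_pow_aux (c : (Fin 4 → ℝ) → ℂ) (c' : (Fin 4 → ℝ) →L[ℝ] ℂ)
    (x : Fin 4 → ℝ) (h : HasFDerivAt c c' x) (n : ℕ) :
    HasFDerivAt (fun y => c y ^ n) ((n : ℂ) • c x ^ (n - 1) • c') x := by
  induction n with
  | zero =>
      have h0 : ((0 : ℕ) : ℂ) • c x ^ (0 - 1) • c' = 0 := by ext v; simp
      rw [h0]
      simp only [pow_zero]
      exact hasFDerivAt_const (𝕜 := ℝ) (1 : ℂ) x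
  | succ n ih =>
      have key : HasFDerivAt (fun y => c y ^ (n + 1))
          ((c x ^ n) • c' + (c x) • ((n : ℂ) • c x ^ (n - 1) • c')) x := by
        simpa only [Pi.mul_def, ← pow_succ] using ih.mul h
      convert key using 1
      ext v
      simp only [ContinuousLinearMap.add_apply, ContinuousLinearMap.smul_apply,
        smul_eq_mul, Nat.add_sub_cancel]
      rcases n with _ | n'
      · norm_num
      · simp only [Nat.succ_sub_one]
        push_cast
        ring

theorem stmt_11 (k : ℕ) (m : ℤ) (hm0 : 0 ≤ m) (hmk : m ≤ (k : ℤ)) (z₁ z₂ : ℂ)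
    (p : Fin 4 → ℝ) :
    fderiv ℝ (Fkm k m z₁ z₂) p (fieldE2 p)
        - Complex.I * fderiv ℝ (Fkm k m z₁ z₂) p (fieldE3 p)
        = 2 * (m : ℂ) * Fkm k (m - 1) z₁ z₂ p ∧
    fderiv ℝ (Fkm k m z₁ z₂) p (fieldE2 p)
        + Complex.I * fderiv ℝ (Fkm k m z₁ z₂) p (fieldE3 p)
        = -2 * ((k : ℂ) - (m : ℂ)) * Fkm k (m + 1) z₁ z₂ p := by
  obtain ⟨n, rfl⟩ := Int.eq_ofNat_of_zero_le hm0
  have hnk : n ≤ k := by exact_mod_cast hmk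
  set A' : (Fin 4 → ℝ) →L[ℝ] ℂ :=
    z₁ • (coordC 0 + Complex.I • coordC 1) + z₂ • (coordC 2 + Complex.I • coordC 3) with hA'
  set B' : (Fin 4 → ℝ) →L[ℝ] ℂ :=
    z₂ • (coordC 0 - Complex.I • coordC 1) - z₁ • (coordC 2 - Complex.I • coordC 3) with hB'
  have hAval : ∀ q : Fin 4 → ℝ, A' q
      = ((q 0 : ℂ) + (q 1 : ℂ) * Complex.I) * z₁ + ((q 2 : ℂ) + (q 3 : ℂ) * Complex.I) * z₂ := by
    intro q
    simp only [hA', ContinuousLinearMap.add_apply, ContinuousLinearMap.smul_apply,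
      coordC_apply, smul_eq_mul]
    ring
  have hBval : ∀ q : Fin 4 → ℝ, B' q
      = (-(starRingEnd ℂ) ((q 2 : ℂ) + (q 3 : ℂ) * Complex.I)) * z₁ +
        (starRingEnd ℂ) ((q 0 : ℂ) + (q 1 : ℂ) * Complex.I) * z₂ := by
    intro q
    simp only [hB', ContinuousLinearMap.sub_apply, ContinuousLinearMap.smul_apply,
      coordC_apply, smul_eq_mul, map_add, map_mul, Complex.conj_ofReal, Complex.conj_I]
    ring
  have hF : Fkm k (n : ℤ) z₁ z₂ = fun q => (A' q) ^ n * (B' q) ^ (k - n) := by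
    funext q
    rw [Fkm, if_pos ⟨Int.ofNat_nonneg n, hmk⟩, hAval, hBval, Int.toNat_natCast]
  have hD : HasFDerivAt (Fkm k (n : ℤ) z₁ z₂)
      ((A' p ^ n) • ((↑(k - n) : ℂ) • B' p ^ (k - n - 1) • B')
        + (B' p ^ (k - n)) • ((n : ℂ) • A' p ^ (n - 1) • A')) p := by
    rw [hF]
    exact (hasFDerivAt_pow_aux _ A' p A'.hasFDerivAt n).mul
      (hasFDerivAt_pow_aux _ B' p B'.hasFDerivAt (k - n))
  have hfd := hD.fderiv
  rw [hfd]
  -- coordinate values of the vector fields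
  have e2v : (fieldE2 p 0 = -p 2) ∧ (fieldE2 p 1 = p 3) ∧ (fieldE2 p 2 = p 0)
      ∧ (fieldE2 p 3 = -p 1) := ⟨rfl, rfl, rfl, rfl⟩
  have e3v : (fieldE3 p 0 = -p 3) ∧ (fieldE3 p 1 = -p 2) ∧ (fieldE3 p 2 = p 1)
      ∧ (fieldE3 p 3 = p 0) := ⟨rfl, rfl, rfl, rfl⟩
  -- key vector field identities
  have hA2 : A' (fieldE2 p) = B' p := by
    rw [hAval, hBval, e2v.1, e2v.2.1, e2v.2.2.1, e2v.2.2.2]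
    simp only [map_add, map_mul, map_neg, Complex.conj_ofReal, Complex.conj_I,
      Complex.ofReal_neg]
    ring
  have hB2 : B' (fieldE2 p) = -A' p := by
    rw [hBval, hAval, e2v.1, e2v.2.1, e2v.2.2.1, e2v.2.2.2]
    simp only [map_add, map_mul, map_neg, Complex.conj_ofReal, Complex.conj_I,
      Complex.ofReal_neg]
    ring_nf
    try simp only [Complex.I_sq]
    try ring
  have hA3 : A' (fieldE3 p) = Complex.I * B' p := by
    rw [hAval, hBval, e3v.1, e3v.2.1, e3v.2.2.1, e3v.2.2.2]
    simp only [map_add, map_mul, map_neg, Complex.conj_ofReal, Complex.conj_I,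
      Complex.ofReal_neg]
    ring_nf
    try simp only [Complex.I_sq]
    try ring
  have hB3 : B' (fieldE3 p) = Complex.I * A' p := by
    rw [hBval, hAval, e3v.1, e3v.2.1, e3v.2.2.1, e3v.2.2.2]
    simp only [map_add, map_mul, map_neg, Complex.conj_ofReal, Complex.conj_I,
      Complex.ofReal_neg]
    ring_nf
    try simp only [Complex.I_sq]
    try ring
  set a := A' p with ha
  set b := B' p with hb
  simp only [ContinuousLinearMap.add_apply, ContinuousLinearMap.smul_apply, smul_eq_mul,
    hA2, hB2, hA3, hB3]
  constructor
  · -- first identity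
    rcases Nat.eq_zero_or_pos n with hn | hn
    · subst hn
      rw [show ((0 : ℕ) : ℤ) - 1 = -1 by norm_num, Fkm, if_neg (by omega)]
      push_cast
      ring_nf
      try simp only [Complex.I_sq]
      try ring
    · obtain ⟨n', rfl⟩ := Nat.exists_eq_add_of_le hn
      rw [show ((1 + n' : ℕ) : ℤ) - 1 = ((n' : ℕ) : ℤ) by push_cast; ring,
        Fkm, if_pos ⟨Int.ofNat_nonneg n', by push_cast at hmk ⊢; omega⟩, Int.toNat_natCast,
        ← hAval, ← hBval, ← ha, ← hb]
      have h2 : (1 + n') - 1 = n' := by omega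
      have h1 : k - n' = (k - (1 + n')) + 1 := by omega
      rw [h2, h1, pow_succ]
      push_cast
      ring_nf
      try simp only [Complex.I_sq]
      try ring
  · -- second identity
    rcases Nat.lt_or_ge n k with hn | hn
    · rw [show ((n : ℕ) : ℤ) + 1 = ((n + 1 : ℕ) : ℤ) by push_cast; ring,
        Fkm, if_pos ⟨Int.ofNat_nonneg _, by push_cast; omega⟩, Int.toNat_natCast,
        ← hAval, ← hBval, ← ha, ← hb, Nat.cast_sub hnk]
      have h2 : k - n - 1 = k - (n + 1) := by omega
      rw [h2]
      push_cast
      ring_nf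
      try simp only [Complex.I_sq]
      rw [show k - n = (k - (n + 1)) + 1 by omega, pow_succ]
      ring
    · have hkn : k = n := le_antisymm hn hnk
      subst hkn
      rw [Fkm, if_neg (by omega)]
      simp only [Nat.sub_self, Nat.cast_zero, pow_zero]
      push_cast
      ring_nf
      try simp only [Complex.I_sq]
      try ring
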